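/- For positive parameters $r_1 > r_2 > 0$, $e, m, q_1, q_2, a_q, k > 0$, the point $(\tilde p_1, \tilde p_2, \tilde z)$ with $\tilde p_1 = \frac{a_q m (r_1+r_2) + e q_2 r_2 \operatorname{artanh}((r_1-r_2)/(r_1+r_2))/k}{e(q_1 a_q r_1 + q_2 r_2)}$, $\tilde p_2 = \frac{m(r_1+r_2) - e q_1 r_1 \operatorname{artanh}((r_1-r_2)/(r_1+r_2))/k}{e(q_1 a_q r_1 + q_2 r_2)}$, $\tilde z = r_1 + r_2$ satisfies the steady-state system $\tilde z (1 + \tanh(k(\tilde p_1 - a_q \tilde p_2)))/2 = r_1$, $\tilde z (1 - \tanh(k(\tilde p_1 - a_q \tilde p_2)))/2 = r_2$, and $(e q_1 \tilde p_1 - m) r_1 + (e q_2 \tilde p_2 - m) r_2 = 0$. -/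

import Mathlib

noncomputable def artanh (x : ℝ) : ℝ := (1/2) * Real.log ((1+x)/(1-x))

lemma tanh_artanh {x : ℝ} (h1 : -1 < x) (h2 : x < 1) : Real.tanh (artanh x) = x := by
  have hu : (0:ℝ) < (1+x)/(1-x) := div_pos (by linarith) (by linarith)
  set s := Real.exp (artanh x) with hs
  have hspos : 0 < s := Real.exp_pos _
  have hs2 : s^2 = (1+x)/(1-x) := by
    rw [hs, ← Real.exp_nat_mul]
    simp only [artanh]
    rw [show (2:ℕ) * ((1:ℝ)/2 * Real.log ((1+x)/(1-x))) = Real.log ((1+x)/(1-x)) by push_cast; ring]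
    exact Real.exp_log hu
  have hms : Real.exp (-(artanh x)) = 1/s := by rw [Real.exp_neg, hs, one_div]
  rw [Real.tanh_eq_sinh_div_cosh, Real.sinh_eq, Real.cosh_eq, ← hs, hms]
  have h1x : (1:ℝ) - x ≠ 0 := by linarith
  have key : s^2 * (1-x) = 1+x := by rw [hs2]; field_simp
  have hden : s + 1/s ≠ 0 := by positivity
  rw [div_div_div_comm]
  field_simp
  nlinarith [key, sq_nonneg s, hspos]

theorem stmt0 (r1 r2 e m q1 q2 aq k : ℝ)
    (hr : r1 > r2) (hr2 : r2 > 0) (he : e > 0) (hm : m > 0)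
    (hq1 : q1 > 0) (hq2 : q2 > 0) (haq : aq > 0) (hk : k > 0) :
    let p1 := (aq*m*(r1+r2) + e*q2*r2*artanh ((r1-r2)/(r1+r2))/k) / (e*(q1*aq*r1 + q2*r2))
    let p2 := (m*(r1+r2) - e*q1*r1*artanh ((r1-r2)/(r1+r2))/k) / (e*(q1*aq*r1 + q2*r2))
    let z := r1 + r2
    z * (1 + Real.tanh (k*(p1 - aq*p2))) / 2 = r1 ∧
    z * (1 - Real.tanh (k*(p1 - aq*p2))) / 2 = r2 ∧
    (e*q1*p1 - m)*r1 + (e*q2*p2 - m)*r2 = 0 := by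
  intro p1 p2 z
  have hsum : (0:ℝ) < r1 + r2 := by linarith
  have hx1 : (-1:ℝ) < (r1-r2)/(r1+r2) := by
    rw [lt_div_iff₀ hsum]; linarith
  have hx2 : (r1-r2)/(r1+r2) < 1 := by
    rw [div_lt_one hsum]; linarith
  have hr1 : (0:ℝ) < r1 := lt_trans hr2 hr
  have hden : e*(q1*aq*r1 + q2*r2) ≠ 0 := by positivity
  set A := artanh ((r1-r2)/(r1+r2)) with hA
  have harg : k*(p1 - aq*p2) = A := by
    show k * ((aq*m*(r1+r2) + e*q2*r2*A/k) / (e*(q1*aq*r1 + q2*r2))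
      - aq*((m*(r1+r2) - e*q1*r1*A/k) / (e*(q1*aq*r1 + q2*r2)))) = A
    field_simp
    ring
  have htanh : Real.tanh (k*(p1 - aq*p2)) = (r1-r2)/(r1+r2) := by
    rw [harg, hA, tanh_artanh hx1 hx2]
  refine ⟨?_, ?_, ?_⟩
  · rw [htanh]; show (r1+r2) * _ / 2 = r1; field_simp; ring
  · rw [htanh]; show (r1+r2) * _ / 2 = r2; field_simp; ring
  · show (e*q1*((aq*m*(r1+r2) + e*q2*r2*A/k) / (e*(q1*aq*r1 + q2*r2))) - m)*r1
      + (e*q2*((m*(r1+r2) - e*q1*r1*A/k) / (e*(q1*aq*r1 + q2*r2))) - m)*r2 = 0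
    field_simp
    ring
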